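/- Let m ≥ 1, L > 0, a ∈ ℝ^m, and let λ ∈ ℝ^m_+ (the nonnegative orthant). Define λ' := [λ − (1/L)·a]₊. Then (1/(2L))·‖[−a]₊‖₂² ≤ ⟨a, λ − λ'⟩ − (L/2)·‖λ − λ'‖₂². -/

import Mathlib

theorem stmt_7 (m : ℕ) (hm : 1 ≤ m) (L : ℝ) (hL : 0 < L)
    (a lam : Fin m → ℝ) (hlam : ∀ i, 0 ≤ lam i) :
    (1 / (2 * L)) * ∑ i, (max (-(a i)) 0) ^ 2 ≤
      (∑ i, a i * (lam i - max (lam i - (1 / L) * a i) 0)) -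
        (L / 2) * ∑ i, (lam i - max (lam i - (1 / L) * a i) 0) ^ 2 := by
  have key : ∀ i, (1 / (2 * L)) * (max (-(a i)) 0) ^ 2 ≤
      a i * (lam i - max (lam i - (1 / L) * a i) 0) -
        (L / 2) * (lam i - max (lam i - (1 / L) * a i) 0) ^ 2 := by
    intro i
    set b := a i with hb
    set x := lam i with hx
    have hx0 : 0 ≤ x := hlam i
    rcases le_total (x - (1 / L) * b) 0 with h | h
    · rw [max_eq_right h]
      have hbx : L * x ≤ b := by
        have h2 := mul_le_mul_of_nonneg_left h (le_of_lt hL)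
        have h3 : L * (x - 1 / L * b) = L * x - b := by field_simp
        rw [h3, mul_zero] at h2
        linarith
      have hb0 : 0 ≤ b := le_trans (by nlinarith) hbx
      rw [max_eq_right (by linarith : -b ≤ 0)]
      nlinarith
    · rw [max_eq_left h]
      have hm2 : (max (-b) 0) ^ 2 ≤ b ^ 2 := by
        rcases le_total (-b) 0 with h2 | h2
        · rw [max_eq_right h2]; simpa using sq_nonneg b
        · rw [max_eq_left h2]; nlinarith
      have : x - (x - (1 / L) * b) = (1 / L) * b := by ring
      rw [this]
      have hL' : (0:ℝ) < 1 / (2 * L) := by positivity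
      have : b * ((1 / L) * b) - L / 2 * ((1 / L) * b) ^ 2 = (1 / (2 * L)) * b ^ 2 := by
        field_simp; ring
      rw [this]
      exact mul_le_mul_of_nonneg_left hm2 (le_of_lt hL')
  calc (1 / (2 * L)) * ∑ i, (max (-(a i)) 0) ^ 2
      = ∑ i, (1 / (2 * L)) * (max (-(a i)) 0) ^ 2 := by rw [Finset.mul_sum]
    _ ≤ ∑ i, (a i * (lam i - max (lam i - (1 / L) * a i) 0) -
          (L / 2) * (lam i - max (lam i - (1 / L) * a i) 0) ^ 2) :=
        Finset.sum_le_sum fun i _ => key i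
    _ = _ := by rw [Finset.sum_sub_distrib, Finset.mul_sum]
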